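/- For every basis Δ of Φ and every admissible subset Y ⊆ Δ, the face F_Y^Δ is a non-empty convex subset of A. -/

import Mathlib

/-!
Common setup for Werner, "Compactifications of Bruhat-Tits buildings associated to
linear representations":  a finite-dimensional real vector space `A` (the apartment),
a root system `Φ` in the dual space together with a Weyl-group invariant inner
product, a finite Weyl-invariant set `Λ` of (K-)weights, and for every basis `Δ`
of `Φ` a highest weight `lam0 Δ ∈ Λ`.
-/

open Pointwise Filter Topology Bornology
open scoped Classical

noncomputable section

/-- A set `M` of linear forms is *connected* if the graph with vertex set `M` and an
edge between `m` and `n` iff `inn m n ≠ 0` is connected. -/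
def GraphConnected {D : Type*} (inn : D → D → ℝ) (M : Set D) : Prop :=
  ∀ m ∈ M, ∀ n ∈ M,
    Relation.ReflTransGen (fun x y => x ∈ M ∧ y ∈ M ∧ inn x y ≠ 0) m n

/-- The coefficients of `μ` as a linear combination of the elements of `Δ` (chosen
arbitrarily if one exists; it is unique when `Δ` is linearly independent). -/
noncomputable def coeffs {A : Type*} [AddCommGroup A] [Module ℝ A]
    (Δ : Finset (Module.Dual ℝ A)) (μ : Module.Dual ℝ A) : Module.Dual ℝ A → ℝ :=
  if h : ∃ n : Module.Dual ℝ A → ℝ, μ = ∑ b ∈ Δ, n b • b then h.choose else fun _ => 0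

/-- The support `[μ]` of `μ` with respect to the basis `Δ`: the set of elements of `Δ`
whose coefficient in `μ` is nonzero. -/
noncomputable def supp {A : Type*} [AddCommGroup A] [Module ℝ A]
    (Δ : Finset (Module.Dual ℝ A)) (μ : Module.Dual ℝ A) : Finset (Module.Dual ℝ A) :=
  Δ.filter fun a => coeffs Δ μ a ≠ 0

/-- Raw data: a finite set `Φ` of roots in the dual of `A`, a product `inn` on the dual,
a finite set `Λ` of weights, and a highest weight `lam0 Δ` for every basis `Δ`. -/
structure RootWeightData (A : Type*) [NormedAddCommGroup A] [NormedSpace ℝ A]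
    [FiniteDimensional ℝ A] where
  Φ : Finset (Module.Dual ℝ A)
  inn : Module.Dual ℝ A → Module.Dual ℝ A → ℝ
  Λ : Finset (Module.Dual ℝ A)
  lam0 : Finset (Module.Dual ℝ A) → Module.Dual ℝ A

namespace RootWeightData

variable {A : Type*} [NormedAddCommGroup A] [NormedSpace ℝ A] [FiniteDimensional ℝ A]
variable (S : RootWeightData A)

/-- The reflection associated to the root `a`. -/
def refl (a : Module.Dual ℝ A) : Function.End (Module.Dual ℝ A) :=
  fun x => x - (2 * S.inn x a / S.inn a a) • a

/-- The Weyl group `W`, generated by the reflections in the roots. -/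
def weyl : Submonoid (Function.End (Module.Dual ℝ A)) :=
  Submonoid.closure {f | ∃ a ∈ S.Φ, f = S.refl a}

/-- `Δ` is a basis of the root system `Φ`: a linearly independent subset of `Φ` such
that every root is a nonnegative or nonpositive linear combination of `Δ`. -/
def IsBase (Δ : Finset (Module.Dual ℝ A)) : Prop :=
  (↑Δ : Set (Module.Dual ℝ A)) ⊆ (S.Φ : Set (Module.Dual ℝ A)) ∧
  LinearIndependent ℝ (fun a : (Δ : Set (Module.Dual ℝ A)) => (a : Module.Dual ℝ A)) ∧
  ∀ a ∈ S.Φ,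
    (∃ n : Module.Dual ℝ A → ℝ, (∀ b ∈ Δ, 0 ≤ n b) ∧ a = ∑ b ∈ Δ, n b • b) ∨
    (∃ n : Module.Dual ℝ A → ℝ, (∀ b ∈ Δ, 0 ≤ n b) ∧ a = -∑ b ∈ Δ, n b • b)

/-- `Y` is an admissible subset of the basis `Δ`: `Y ⊆ Δ` and `Y ∪ {λ₀(Δ)}` is
connected. -/
def Admissible (Δ Y : Finset (Module.Dual ℝ A)) : Prop :=
  Y ⊆ Δ ∧ GraphConnected S.inn ((↑Y : Set (Module.Dual ℝ A)) ∪ {S.lam0 Δ})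

end RootWeightData

/-- The whole setting of Werner's paper: the data of `RootWeightData`, where `Φ` is a
(crystallographic, possibly non-reduced) root system spanning the dual of `A`, `inn` is
a Weyl-invariant inner product, `Λ` is a finite Weyl-invariant set of weights, and
`lam0` picks, Weyl-equivariantly, a highest weight for each basis, dominating all of
`Λ`; moreover a subset of a basis is admissible iff it is the support of
`λ₀(Δ) - λ` for some weight `λ`. -/
structure RootWeightSystem (A : Type*) [NormedAddCommGroup A] [NormedSpace ℝ A]
    [FiniteDimensional ℝ A] extends RootWeightData A where
  inn_symm : ∀ x y, inn x y = inn y x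
  inn_add_left : ∀ x y z, inn (x + y) z = inn x z + inn y z
  inn_smul_left : ∀ (c : ℝ) (x y), inn (c • x) y = c * inn x y
  inn_pos : ∀ x, x ≠ 0 → 0 < inn x x
  root_ne_zero : ∀ a ∈ Φ, a ≠ (0 : Module.Dual ℝ A)
  neg_mem : ∀ a ∈ Φ, -a ∈ Φ
  refl_mem : ∀ a ∈ Φ, ∀ b ∈ Φ, toRootWeightData.refl a b ∈ Φ
  inn_weyl_invariant :
    ∀ w ∈ toRootWeightData.weyl, ∀ x y, inn (w x) (w y) = inn x y
  phi_spans : Submodule.span ℝ (Φ : Set (Module.Dual ℝ A)) = ⊤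
  exists_base : ∃ Δ, toRootWeightData.IsBase Δ
  base_cover : ∀ x : A, ∃ Δ, toRootWeightData.IsBase Δ ∧ ∀ a ∈ Δ, 0 ≤ a x
  base_weyl : ∀ w ∈ toRootWeightData.weyl, ∀ Δ, toRootWeightData.IsBase Δ →
    toRootWeightData.IsBase (Δ.image (w : Module.Dual ℝ A → Module.Dual ℝ A))
  lam0_mem : ∀ Δ, toRootWeightData.IsBase Δ → lam0 Δ ∈ Λ
  lam0_dominates : ∀ Δ, toRootWeightData.IsBase Δ → ∀ l ∈ Λ,
    ∃ n : Module.Dual ℝ A → ℝ, (∀ a ∈ Δ, 0 ≤ n a) ∧ lam0 Δ - l = ∑ a ∈ Δ, n a • a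
  weight_weyl_invariant : ∀ w ∈ toRootWeightData.weyl, ∀ l ∈ Λ, w l ∈ Λ
  lam0_equivariant : ∀ w ∈ toRootWeightData.weyl, ∀ Δ, toRootWeightData.IsBase Δ →
    lam0 (Δ.image (w : Module.Dual ℝ A → Module.Dual ℝ A)) = w (lam0 Δ)
  integrality : ∀ l ∈ Λ, ∀ a ∈ Φ, ∃ k : ℤ, 2 * inn l a / inn a a = (k : ℝ)
  admissible_iff_support : ∀ Δ, toRootWeightData.IsBase Δ → ∀ Y ⊆ Δ,
    (toRootWeightData.Admissible Δ Y ↔ ∃ l ∈ Λ, supp Δ (lam0 Δ - l) = Y)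

namespace RootWeightSystem

variable {A : Type*} [NormedAddCommGroup A] [NormedSpace ℝ A] [FiniteDimensional ℝ A]
variable (S : RootWeightSystem A)

/-- The face `F_Y^Δ` of the apartment `A` associated to a basis `Δ` and an admissible
subset `Y ⊆ Δ`. -/
def Face (Δ Y : Finset (Module.Dual ℝ A)) : Set A :=
  {x | (∀ a ∈ Y, a x = 0) ∧
    ∀ l ∈ S.Λ, ¬ supp Δ (S.lam0 Δ - l) ⊆ Y → 0 < (S.lam0 Δ - l) x}

/-- `F` belongs to the collection `Σ` of faces. -/
def IsFace (F : Set A) : Prop :=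
  ∃ Δ Y, S.toRootWeightData.IsBase Δ ∧ S.toRootWeightData.Admissible Δ Y ∧
    F = S.Face Δ Y

/-- The collection `Σ` of all faces. -/
def Faces : Type _ := {F : Set A // S.IsFace F}

/-- The relation identifying `(F, u)` and `(F, v)` when `u - v ∈ ⟨F⟩`; the quotient is
the disjoint union `Ā = ⊔_{F ∈ Σ} A/⟨F⟩`. -/
def AbarRel (p q : S.Faces × A) : Prop :=
  p.1 = q.1 ∧ p.2 - q.2 ∈ Submodule.span ℝ p.1.val

/-- The compactified apartment `Ā = ⊔_{F ∈ Σ} A_F`, `A_F = A/⟨F⟩`. -/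
def Abar : Type _ := Quot S.AbarRel

/-- `r_F(u)`, the image of `u ∈ A` in the stratum `A_F` of `Ā`. -/
def mkAbar (F : S.Faces) (u : A) : S.Abar := Quot.mk _ (F, u)

/-- The basic set `Γ_F(U) = ⋃_{F' ⊆ cl F} r_{F'}(U + F)` of `Ā`. -/
def Gamma (F : S.Faces) (U : Set A) : Set S.Abar :=
  {p | ∃ F' : S.Faces, F'.val ⊆ closure F.val ∧ ∃ u ∈ U + F.val, p = S.mkAbar F' u}

/-- The topology of `Ā`, generated by the sets `Γ_F(U)` for `F ∈ Σ` and `U ⊆ A`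
bounded and open. -/
instance : TopologicalSpace S.Abar :=
  TopologicalSpace.generateFrom
    {V : Set S.Abar | ∃ (F : S.Faces) (U : Set A),
      IsOpen U ∧ IsBounded U ∧ V = S.Gamma F U}

/-- `f_Ω(a) = inf {t : Ω ⊆ cl_Ā {z ∈ A : a(z) ≥ -t}} ∈ ℝ ∪ {±∞}`, where `A` is embedded
in `Ā` as the stratum of the face `F₀ = {0}`. -/
def fOmega (F₀ : S.Faces) (Ω : Set S.Abar) (a : Module.Dual ℝ A) : EReal :=
  sInf ((fun t : ℝ => (t : EReal)) ''
    {t : ℝ | Ω ⊆ closure (S.mkAbar F₀ '' {z : A | -t ≤ a z})})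

end RootWeightSystem


variable {A : Type*} [NormedAddCommGroup A] [NormedSpace ℝ A] [FiniteDimensional ℝ A]


theorem exists_dual_values' {A : Type*} [NormedAddCommGroup A] [NormedSpace ℝ A]
    [FiniteDimensional ℝ A] (Δ : Finset (Module.Dual ℝ A))
    (hli : LinearIndependent ℝ (fun a : (Δ : Set (Module.Dual ℝ A)) => (a : Module.Dual ℝ A)))
    (c : Module.Dual ℝ A → ℝ) :
    ∃ x : A, ∀ a ∈ Δ, a x = c a := by
  classical
  have hli' : LinearIndepOn ℝ id (Δ : Set (Module.Dual ℝ A)) := hli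
  set B := Module.Basis.extend hli' with hB
  let φ : Module.Dual ℝ (Module.Dual ℝ A) :=
    ∑ b ∈ Δ.attach, c b.1 • B.coord ⟨b.1, hli'.subset_extend _ b.2⟩
  refine ⟨(Module.evalEquiv ℝ A).symm φ, fun a ha => ?_⟩
  rw [Module.apply_evalEquiv_symm_apply]
  have hφ : φ a = ∑ b ∈ Δ.attach, c b.1 * (B.coord ⟨b.1, hli'.subset_extend _ b.2⟩) a := by
    simp [φ]
  rw [hφ]
  have key : ∀ b : {x // x ∈ Δ}, (B.coord ⟨b.1, hli'.subset_extend _ b.2⟩) a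
      = if (b.1 : Module.Dual ℝ A) = a then 1 else 0 := by
    intro b
    have ha' : a ∈ hli'.extend (Set.subset_univ _) := hli'.subset_extend _ ha
    by_cases hba : (b.1 : Module.Dual ℝ A) = a
    · have e : a = B ⟨b.1, hli'.subset_extend _ b.2⟩ := by
        rw [hB, Module.Basis.extend_apply_self]; exact hba.symm
      rw [if_pos hba]
      conv_lhs => rw [e]
      simp
    · have e : a = B ⟨a, ha'⟩ := by
        rw [hB, Module.Basis.extend_apply_self]
      rw [if_neg hba]
      conv_lhs => rw [e]
      simp [Module.Basis.coord_apply, Module.Basis.repr_self, Finsupp.single_apply, Subtype.ext_iff,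
        Ne.symm hba]
  simp only [key]
  rw [Finset.sum_eq_single (⟨a, ha⟩ : {x // x ∈ Δ})]
  · simp
  · intro b _ hb
    have : (b.1 : Module.Dual ℝ A) ≠ a := fun h => hb (Subtype.ext h)
    simp [this]
  · simp

theorem coeffs_eq' {A : Type*} [AddCommGroup A] [Module ℝ A]
    (Δ : Finset (Module.Dual ℝ A))
    (hli : LinearIndependent ℝ (fun a : (Δ : Set (Module.Dual ℝ A)) => (a : Module.Dual ℝ A)))
    (μ : Module.Dual ℝ A) (n : Module.Dual ℝ A → ℝ) (hn : μ = ∑ b ∈ Δ, n b • b) :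
    ∀ b ∈ Δ, coeffs Δ μ b = n b := by
  classical
  have hex : ∃ m : Module.Dual ℝ A → ℝ, μ = ∑ b ∈ Δ, m b • b := ⟨n, hn⟩
  intro b hb
  rw [coeffs, dif_pos hex]
  have hz : ∑ c ∈ Δ, (hex.choose c - n c) • c = 0 := by
    rw [Finset.sum_congr rfl (fun c _ => sub_smul (hex.choose c) (n c) c),
      Finset.sum_sub_distrib, ← hex.choose_spec, ← hn, sub_self]
  have h2 := Fintype.linearIndependent_iff.mp hli
    (fun i : (Δ : Set (Module.Dual ℝ A)) => hex.choose i.1 - n i.1) ?_ ⟨b, hb⟩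
  · linarith [h2]
  · rw [← hz]
    exact Finset.sum_coe_sort Δ (fun c => (hex.choose c - n c) • c)

/-- For every basis `Δ` of `Φ` and every admissible subset `Y ⊆ Δ`,
the face `F_Y^Δ` is a non-empty convex subset of `A`. -/
theorem face_nonempty_and_convex (S : RootWeightSystem A)
    (Δ Y : Finset (Module.Dual ℝ A))
    (hΔ : S.toRootWeightData.IsBase Δ) (hY : S.toRootWeightData.Admissible Δ Y) :
    (S.Face Δ Y).Nonempty ∧ Convex ℝ (S.Face Δ Y) := by
  classical
  obtain ⟨hΔΦ, hli, hcomb⟩ := hΔ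
  constructor
  · obtain ⟨x, hx⟩ := exists_dual_values' Δ hli (fun a => if a ∈ Y then 0 else 1)
    refine ⟨x, fun a ha => by rw [hx a (hY.1 ha)]; simp [ha], fun l hl hns => ?_⟩
    obtain ⟨n, hn0, hnsum⟩ := S.lam0_dominates Δ ⟨hΔΦ, hli, hcomb⟩ l hl
    have hc := coeffs_eq' Δ hli _ n hnsum
    obtain ⟨a, hasupp, haY⟩ := Finset.not_subset.mp hns
    have haΔ : a ∈ Δ := (Finset.mem_filter.mp hasupp).1
    have hane : coeffs Δ (S.lam0 Δ - l) a ≠ 0 := (Finset.mem_filter.mp hasupp).2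
    have hna : 0 < n a :=
      lt_of_le_of_ne (hn0 a haΔ) fun h => hane (by rw [hc a haΔ, ← h])
    have hval : (S.lam0 Δ - l) x = ∑ b ∈ Δ, n b * (if b ∈ Y then (0:ℝ) else 1) := by
      rw [hnsum]
      rw [LinearMap.sum_apply]
      exact Finset.sum_congr rfl fun b hb => by
        rw [LinearMap.smul_apply, smul_eq_mul, hx b hb]
    rw [hval]
    refine Finset.sum_pos' (fun b hb => mul_nonneg (hn0 b hb) (by split <;> norm_num))
      ⟨a, haΔ, ?_⟩
    rw [if_neg haY, mul_one]
    exact hna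
  · intro p hp q hq t s ht hs hts
    constructor
    · intro a ha
      have := hp.1 a ha
      have := hq.1 a ha
      simp only [map_add, map_smul, smul_eq_mul]
      rw [hp.1 a ha, hq.1 a ha]
      ring
    · intro l hl hns
      have hp2 := hp.2 l hl hns
      have hq2 := hq.2 l hl hns
      have hlin : (S.lam0 Δ - l) (t • p + s • q)
          = t * (S.lam0 Δ - l) p + s * (S.lam0 Δ - l) q := by
        simp only [map_add, map_smul, smul_eq_mul]
      rw [hlin]
      rcases ht.eq_or_lt with h | h
      · have hs1 : s = 1 := by linarith
        rw [← h, hs1]; linarith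
      · nlinarith [mul_pos h hp2, mul_nonneg hs hq2.le]
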